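/- The characteristic polynomial of M(λ) (as a polynomial in x) factors as (x − 1)·(x − (1 + (5+√5)/2·λ))·(x − (1 + (5−√5)/2·λ))·(x − (1 + (3+√5)/2·λ))·(x − (1 + (3−√5)/2·λ)), i.e., the eigenvalues of M(λ) are 1, 1 + (5±√5)/2·λ, and 1 + (3±√5)/2·λ. -/

import Mathlib

open Matrix Polynomial

private theorem det_fin_four' {R : Type*} [CommRing R] (a b c d e f g h i j k l m n o p : R) :
    Matrix.det !![a,b,c,d; e,f,g,h; i,j,k,l; m,n,o,p] =
      a*(f*(k*p-l*o)-g*(j*p-l*n)+h*(j*o-k*n))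
      - b*(e*(k*p-l*o)-g*(i*p-l*m)+h*(i*o-k*m))
      + c*(e*(j*p-l*n)-f*(i*p-l*m)+h*(i*n-j*m))
      - d*(e*(j*o-k*n)-f*(i*o-k*m)+g*(i*n-j*m)) := by
  simp [Matrix.det_succ_row_zero, Fin.sum_univ_succ, Fin.succAbove,
    Fin.castSucc, Fin.castAdd, Fin.castLE]
  ring

private theorem det_fin_five' {R : Type*} [CommRing R] (p1 p2 q : R) :
    Matrix.det !![p1, q, 0, 0, 0;
                  q, p2, q, 0, 0;
                  0, q, p2, q, 0;
                  0, 0, q, p2, q;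
                  0, 0, 0, q, p1] =
      p1^2*p2^3 - 2*p1^2*p2*q^2 - 2*p1*p2^2*q^2 + 2*p1*q^4 + p2*q^4 := by
  rw [Matrix.det_succ_row_zero, Fin.sum_univ_five]
  have e0 : (Matrix.submatrix !![p1, q, 0, 0, 0; q, p2, q, 0, 0; 0, q, p2, q, 0;
      0, 0, q, p2, q; 0, 0, 0, q, p1] Fin.succ (Fin.succAbove 0)) =
      !![p2, q, 0, 0; q, p2, q, 0; 0, q, p2, q; 0, 0, q, p1] := by
    ext i j; fin_cases i <;> fin_cases j <;> rfl
  have e1 : (Matrix.submatrix !![p1, q, 0, 0, 0; q, p2, q, 0, 0; 0, q, p2, q, 0;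
      0, 0, q, p2, q; 0, 0, 0, q, p1] Fin.succ (Fin.succAbove 1)) =
      !![q, q, 0, 0; 0, p2, q, 0; 0, q, p2, q; 0, 0, q, p1] := by
    ext i j; fin_cases i <;> fin_cases j <;> rfl
  rw [e0, e1]
  simp only [Matrix.cons_val', Matrix.cons_val_zero, Matrix.cons_val_one, Matrix.head_cons,
    Matrix.empty_val', Matrix.cons_val_fin_one, Matrix.head_fin_const, Matrix.of_apply,
    Matrix.cons_val_succ, Fin.isValue, Matrix.cons_val_two, Matrix.tail_cons,
    Matrix.cons_val_three, Matrix.cons_val_four, Fin.val_zero, Fin.val_one, pow_zero, pow_one, zero_mul, mul_zero, add_zero, zero_add]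
  rw [det_fin_four', det_fin_four']
  ring

theorem stmt_1 (lam : ℝ) :
    let M : Matrix (Fin 5) (Fin 5) ℝ :=
      !![1+lam, -lam, 0, 0, 0;
         -lam, 1+2*lam, -lam, 0, 0;
         0, -lam, 1+2*lam, -lam, 0;
         0, 0, -lam, 1+2*lam, -lam;
         0, 0, 0, -lam, 1+lam]
    M.charpoly =
      (X - C 1) * (X - C (1 + (5 + Real.sqrt 5)/2 * lam)) *
        (X - C (1 + (5 - Real.sqrt 5)/2 * lam)) *
        (X - C (1 + (3 + Real.sqrt 5)/2 * lam)) *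
        (X - C (1 + (3 - Real.sqrt 5)/2 * lam)) := by
  intro M
  have hs : Real.sqrt 5 * Real.sqrt 5 = 5 := Real.mul_self_sqrt (by norm_num)
  have key : ∀ a b : ℝ, (X - C a) * ((X : ℝ[X]) - C b)
      = X^2 - C (a+b)*X + C (a*b) := by
    intro a b; simp only [C_add, C_mul]; ring
  have h1 : (X - C (1 + (5 + Real.sqrt 5)/2 * lam)) * ((X:ℝ[X]) - C (1 + (5 - Real.sqrt 5)/2 * lam))
      = X^2 - C (2 + 5*lam)*X + C (1 + 5*lam + 5*lam^2) := by
    rw [key]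
    congr 2
    · ring_nf
    · nlinarith [hs]
  have h2 : (X - C (1 + (3 + Real.sqrt 5)/2 * lam)) * ((X:ℝ[X]) - C (1 + (3 - Real.sqrt 5)/2 * lam))
      = X^2 - C (2 + 3*lam)*X + C (1 + 3*lam + lam^2) := by
    rw [key]
    congr 2
    · ring_nf
    · nlinarith [hs]
  rw [show (X - C 1) * (X - C (1 + (5 + Real.sqrt 5)/2 * lam)) *
        (X - C (1 + (5 - Real.sqrt 5)/2 * lam)) *
        (X - C (1 + (3 + Real.sqrt 5)/2 * lam)) *
        (X - C (1 + (3 - Real.sqrt 5)/2 * lam))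
      = (X - C 1) * ((X - C (1 + (5 + Real.sqrt 5)/2 * lam)) * (X - C (1 + (5 - Real.sqrt 5)/2 * lam))) *
        ((X - C (1 + (3 + Real.sqrt 5)/2 * lam)) * (X - C (1 + (3 - Real.sqrt 5)/2 * lam))) by ring,
    h1, h2]
  have hM : charmatrix M =
      !![X - C (1+lam), C lam, 0, 0, 0;
         C lam, X - C (1+2*lam), C lam, 0, 0;
         0, C lam, X - C (1+2*lam), C lam, 0;
         0, 0, C lam, X - C (1+2*lam), C lam;
         0, 0, 0, C lam, X - C (1+lam)] := by
    apply Matrix.ext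
    intro i j
    fin_cases i <;> fin_cases j <;>
      simp [charmatrix_apply, Matrix.diagonal_apply, M, Matrix.vecHead, Matrix.vecTail,
        Fin.ext_iff] <;> decide
  rw [Matrix.charpoly, hM, det_fin_five']
  simp only [C_add, C_mul, C_sub, C_1, map_ofNat, C_pow]
  ring
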